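/- Let t and t' be finite directed trees, each with at least two vertices, with designated roots ρ and ρ' of degree one, and in which no vertex has indegree and outdegree both equal to one. Let T be the multidigraph obtained from their disjoint union by identifying ρ with ρ'. Let π be a solid partition of the vertex set of T such that the quotient T^π is an oriented cactus. Then π induces a pair partition of the two vertex sets: every vertex of t lies in the same block of π as exactly one vertex of t' and vice versa (with the convention that ρ corresponds to ρ'), so π induces a bijection f_π from the vertices of t to the vertices of t'. -/

import Mathlib

set_option autoImplicit false

/-! ## Multigraphs -/

/-- A multigraph: a vertex type `V`, an edge type `E`, and an assignment to each edge of
its unordered pair of endpoints.  Loops and parallel edges are allowed. -/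
structure Multigraph (V E : Type) where
  ends : E → Sym2 V

namespace Multigraph

variable {V E : Type}

/-- `G.ReachAvoid F u v` : `v` can be reached from `u` by a walk using no edge of `F`. -/
inductive ReachAvoid (G : Multigraph V E) (F : Set E) : V → V → Prop
  | refl (v : V) : ReachAvoid G F v v
  | tail {u v w : V} (e : E) (he : e ∉ F) (hvw : G.ends e = s(v, w))
      (h : ReachAvoid G F u v) : ReachAvoid G F u w

/-- A multigraph is connected if any two vertices are joined by a walk. -/
def Connected (G : Multigraph V E) : Prop := ∀ u v : V, G.ReachAvoid ∅ u v

/-- `F` is a set of edges whose deletion disconnects `v` from `w`. -/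
def IsEdgeCut (G : Multigraph V E) (v w : V) (F : Set E) : Prop := ¬ G.ReachAvoid F v w

/-- Edge connectivity `λ(v, w)`: the minimum number of edges whose deletion
disconnects `v` from `w`. -/
noncomputable def edgeConn (G : Multigraph V E) (v w : V) : ℕ :=
  sInf {k : ℕ | ∃ F : Finset E, F.card = k ∧ G.IsEdgeCut v w ↑F}

/-- Walks in a multigraph, recorded together with the edges they traverse. -/
inductive Walk (G : Multigraph V E) : V → V → Type
  | nil (v : V) : Walk G v v
  | cons {u v w : V} (e : E) (huv : G.ends e = s(u, v)) (p : Walk G v w) : Walk G u w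

namespace Walk

variable {G : Multigraph V E}

/-- The list of edges traversed by a walk. -/
def edges : ∀ {u v : V}, G.Walk u v → List E
  | _, _, .nil _ => []
  | _, _, .cons e _ p => e :: edges p

/-- The list of vertices visited by a walk (including both endpoints). -/
def verts : ∀ {u v : V}, G.Walk u v → List V
  | _, v, .nil _ => [v]
  | u, _, .cons _ _ p => u :: verts p

/-- A walk is a path if it visits no vertex twice. -/
def IsPath {u v : V} (p : G.Walk u v) : Prop := p.verts.Nodup

end Walk

/-- `S` is the edge set of a simple cycle of `G`: a nonempty closed walk with no repeated
edges and no repeated vertices (other than the final return to the starting point).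
A loop is a simple cycle of length one. -/
def IsSimpleCycleOn [DecidableEq E] (G : Multigraph V E) (S : Finset E) : Prop :=
  ∃ (v : V) (p : G.Walk v v),
    p.edges ≠ [] ∧ p.edges.Nodup ∧ p.verts.dropLast.Nodup ∧ p.edges.toFinset = S

/-- A cactus: a connected multigraph in which every edge lies on exactly one simple cycle
(simple cycles being identified with their edge sets). -/
def IsCactus [DecidableEq E] (G : Multigraph V E) : Prop :=
  G.Connected ∧ ∀ e : E, ∃! S : Finset E, G.IsSimpleCycleOn S ∧ e ∈ S

/-- Two-edge-connected: connected, and still connected after deleting any single edge. -/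
def TwoEdgeConnected (G : Multigraph V E) : Prop :=
  G.Connected ∧ ∀ (e : E) (u v : V), G.ReachAvoid {e} u v

/-- The quotient multigraph by a partition (setoid) of the vertices: the vertices are the
blocks, and each edge joins the blocks of its original endpoints. -/
def quot (G : Multigraph V E) (σ : Setoid V) : Multigraph (Quotient σ) E :=
  ⟨fun e => (G.ends e).map (Quotient.mk σ)⟩

/-- Degree of a vertex: the number of edge-incidences at it (loops count twice). -/
def degree [DecidableEq V] [Fintype E] (G : Multigraph V E) (v : V) : ℕ :=
  ∑ e : E,
    Sym2.lift
      ⟨fun a b => (if a = v then 1 else 0) + (if b = v then 1 else 0),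
        fun _ _ => add_comm _ _⟩ (G.ends e)

/-- A leaf is a vertex of degree one. -/
def IsLeaf [DecidableEq V] [Fintype E] (G : Multigraph V E) (v : V) : Prop :=
  G.degree v = 1

/-- A tree: a connected multigraph with no simple cycles. -/
def IsTree [DecidableEq E] (G : Multigraph V E) : Prop :=
  G.Connected ∧ ∀ S : Finset E, ¬ G.IsSimpleCycleOn S

end Multigraph

/-- An embedding of the multigraph `H` into `G`, realizing `H` as a subgraph of `G`. -/
structure Multigraph.Embedding {W F V E : Type} (H : Multigraph W F) (G : Multigraph V E) where
  vmap : W → V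
  emap : F → E
  vmap_inj : Function.Injective vmap
  emap_inj : Function.Injective emap
  ends_map : ∀ f : F, G.ends (emap f) = (H.ends f).map vmap

/-! ## Multidigraphs -/

/-- A multidigraph: vertex type `V`, edge type `E`, and source and target maps. -/
structure Multidigraph (V E : Type) where
  src : E → V
  tgt : E → V

namespace Multidigraph

variable {V E : Type}

/-- The underlying multigraph of a multidigraph. -/
def toMultigraph (D : Multidigraph V E) : Multigraph V E :=
  ⟨fun e => s(D.src e, D.tgt e)⟩

/-- Directed walks in a multidigraph. -/
inductive DiWalk (D : Multidigraph V E) : V → V → Type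
  | nil (v : V) : DiWalk D v v
  | cons {u v w : V} (e : E) (hs : D.src e = u) (ht : D.tgt e = v)
      (p : DiWalk D v w) : DiWalk D u w

namespace DiWalk

variable {D : Multidigraph V E}

/-- The list of edges traversed by a directed walk. -/
def edges : ∀ {u v : V}, D.DiWalk u v → List E
  | _, _, .nil _ => []
  | _, _, .cons e _ _ p => e :: edges p

/-- The list of vertices visited by a directed walk. -/
def verts : ∀ {u v : V}, D.DiWalk u v → List V
  | _, v, .nil _ => [v]
  | u, _, .cons _ _ _ p => u :: verts p

end DiWalk

/-- `S` is the edge set of a simple directed cycle of `D`. -/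
def IsDiCycleOn [DecidableEq E] (D : Multidigraph V E) (S : Finset E) : Prop :=
  ∃ (v : V) (p : D.DiWalk v v),
    p.edges ≠ [] ∧ p.edges.Nodup ∧ p.verts.dropLast.Nodup ∧ p.edges.toFinset = S

/-- An oriented cactus: the underlying multigraph is a cactus and each of its simple
cycles (pads) is a directed cycle. -/
def IsOrientedCactus [DecidableEq E] (D : Multidigraph V E) : Prop :=
  D.toMultigraph.IsCactus ∧
    ∀ S : Finset E, D.toMultigraph.IsSimpleCycleOn S → D.IsDiCycleOn S

/-- The quotient multidigraph by a partition (setoid) of the vertices. -/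
def quot (D : Multidigraph V E) (σ : Setoid V) : Multidigraph (Quotient σ) E where
  src := fun e => Quotient.mk σ (D.src e)
  tgt := fun e => Quotient.mk σ (D.tgt e)

/-- Indegree of a vertex: the number of edges with target `v`. -/
def indeg [DecidableEq V] [Fintype E] (D : Multidigraph V E) (v : V) : ℕ :=
  (Finset.univ.filter fun e => D.tgt e = v).card

/-- Outdegree of a vertex: the number of edges with source `v`. -/
def outdeg [DecidableEq V] [Fintype E] (D : Multidigraph V E) (v : V) : ℕ :=
  (Finset.univ.filter fun e => D.src e = v).card

end Multidigraph

/-- An embedding of the multidigraph `H` into `G`, realizing `H` as a subgraph of `G`. -/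
structure Multidigraph.Embedding {W F V E : Type}
    (H : Multidigraph W F) (G : Multidigraph V E) where
  vmap : W → V
  emap : F → E
  vmap_inj : Function.Injective vmap
  emap_inj : Function.Injective emap
  src_map : ∀ f : F, G.src (emap f) = vmap (H.src f)
  tgt_map : ∀ f : F, G.tgt (emap f) = vmap (H.tgt f)

/-! ## Cycle graphs and non-crossing partitions -/

/-- The cycle graph of length `n`: vertices `Fin n`, edges `Fin n`, edge `i` joining
`v i` and `v (i+1)` (indices mod `n`). -/
def cycleGraph (n : ℕ) [NeZero n] : Multigraph (Fin n) (Fin n) :=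
  ⟨fun i => s(i, i + 1)⟩

/-- The cycle graph of length `n` in which each edge carries an orientation:
edge `i` is oriented counterclockwise (from `v i` to `v (i+1)`) if `orient i = true`,
and clockwise otherwise. -/
def cycleDigraph (n : ℕ) [NeZero n] (orient : Fin n → Bool) : Multidigraph (Fin n) (Fin n) where
  src := fun i => if orient i then i else i + 1
  tgt := fun i => if orient i then i + 1 else i

/-- A relation (e.g. a partition) on `Fin m` is non-crossing if there are no indices
`i₁ < i₂ < i₃ < i₄` with `i₁, i₃` in one block and `i₂, i₄` in a different block. -/
def NonCrossingRel {m : ℕ} (r : Fin m → Fin m → Prop) : Prop :=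
  ¬ ∃ i₁ i₂ i₃ i₄ : Fin m, i₁ < i₂ ∧ i₂ < i₃ ∧ i₃ < i₄ ∧ r i₁ i₃ ∧ r i₂ i₄ ∧ ¬ r i₁ i₂

/-- The union of a partition `σ` of the vertices `v₁, …, vₙ` (at the even positions) and
a partition `κ` of the edges `e₁, …, eₙ` (at the odd positions) of a cycle, as a relation
on the `2n` interlaced points `v₁, e₁, v₂, e₂, …, vₙ, eₙ`. -/
def interRel {n : ℕ} (σ κ : Setoid (Fin n)) (x y : Fin (2 * n)) : Prop :=
  (x.val % 2 = 0 ∧ y.val % 2 = 0 ∧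
    σ.r ⟨x.val / 2, by have := x.isLt; omega⟩ ⟨y.val / 2, by have := y.isLt; omega⟩) ∨
  (x.val % 2 = 1 ∧ y.val % 2 = 1 ∧
    κ.r ⟨x.val / 2, by have := x.isLt; omega⟩ ⟨y.val / 2, by have := y.isLt; omega⟩)

/-- `κ` is the Kreweras complement of `σ`: the largest partition of the edges such that
the union `σ ∪ κ` is non-crossing with respect to the interlaced (cyclic) order. -/
def IsKrewerasComplement {n : ℕ} (σ κ : Setoid (Fin n)) : Prop :=
  NonCrossingRel (interRel σ κ) ∧
    ∀ κ' : Setoid (Fin n), NonCrossingRel (interRel σ κ') → κ' ≤ κ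

open Classical in
/-- The block of the partition `κ` containing `i`, as a finite set. -/
noncomputable def setoidClass {n : ℕ} (κ : Setoid (Fin n)) (i : Fin n) : Finset (Fin n) :=
  Finset.univ.filter fun j => κ.r i j

open Fin.NatCast in
/-- `j` is the next element of `B` encountered strictly after `i` in the cyclic order of
`Fin n` (if `B = {i}` then `j = i` itself, one full turn later). -/
def CyclicNextIn {n : ℕ} [NeZero n] (B : Finset (Fin n)) (i j : Fin n) : Prop :=
  i ∈ B ∧ j ∈ B ∧ ∃ d : ℕ, 0 < d ∧ d ≤ n ∧ j = i + (d : Fin n) ∧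
    ∀ d' : ℕ, 0 < d' → d' < d → i + (d' : Fin n) ∉ B

/-! ## Wedges of two (di)graphs at their roots -/

/-- The canonical map from the vertices of `t'` into the wedge vertex type
`V ⊕ {x : V' // x ≠ ρ'}`, sending the root `ρ'` to (the image of) `ρ`. -/
def wedgeJ {V V' : Type} [DecidableEq V'] (ρ : V) (ρ' : V') :
    V' → V ⊕ {x : V' // x ≠ ρ'} :=
  fun x => if h : x = ρ' then Sum.inl ρ else Sum.inr ⟨x, h⟩

/-- The wedge of two multigraphs `t`, `t'` obtained by identifying `ρ ∈ t` with `ρ' ∈ t'`. -/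
def Multigraph.wedge {V E V' E' : Type} [DecidableEq V']
    (t : Multigraph V E) (t' : Multigraph V' E') (ρ : V) (ρ' : V') :
    Multigraph (V ⊕ {x : V' // x ≠ ρ'}) (E ⊕ E') :=
  ⟨fun e =>
    match e with
    | Sum.inl e => (t.ends e).map Sum.inl
    | Sum.inr e => (t'.ends e).map (wedgeJ ρ ρ')⟩

/-- The wedge of two multidigraphs `t`, `t'` obtained by identifying `ρ ∈ t` with `ρ' ∈ t'`. -/
def Multidigraph.wedge {V E V' E' : Type} [DecidableEq V']
    (t : Multidigraph V E) (t' : Multidigraph V' E') (ρ : V) (ρ' : V') :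
    Multidigraph (V ⊕ {x : V' // x ≠ ρ'}) (E ⊕ E') where
  src := fun e =>
    match e with
    | Sum.inl e => Sum.inl (t.src e)
    | Sum.inr e => wedgeJ ρ ρ' (t'.src e)
  tgt := fun e =>
    match e with
    | Sum.inl e => Sum.inl (t.tgt e)
    | Sum.inr e => wedgeJ ρ ρ' (t'.tgt e)

/-! ## Flowers (a cycle with graphs attached) and stars (trees wedged at a common root) -/

/-- The canonical map from the vertices of the `i`-th attached graph into the flower,
sending the basepoint `b i` to the cycle vertex `i`. -/
def flowerJ {n : ℕ} {W : Fin n → Type} [∀ i, DecidableEq (W i)]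
    (b : ∀ i, W i) (i : Fin n) :
    W i → Fin n ⊕ (Σ i, {x : W i // x ≠ b i}) :=
  fun x => if h : x = b i then Sum.inl i else Sum.inr ⟨i, x, h⟩

/-- The flower: a cycle of length `n` with the multigraph `d i` attached at the cycle
vertex `i` via its basepoint `b i`; the attached graphs are disjoint except through the
cycle, and `d i` meets the cycle exactly in the vertex `i`. -/
def flowerGraph {n : ℕ} [NeZero n] {W F : Fin n → Type} [∀ i, DecidableEq (W i)]
    (d : ∀ i, Multigraph (W i) (F i)) (b : ∀ i, W i) :
    Multigraph (Fin n ⊕ (Σ i, {x : W i // x ≠ b i})) (Fin n ⊕ (Σ i, F i)) :=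
  ⟨fun e =>
    match e with
    | Sum.inl k => s(Sum.inl k, Sum.inl (k + 1))
    | Sum.inr ⟨i, f⟩ => ((d i).ends f).map (flowerJ b i)⟩

/-- The canonical map from the vertices of the `i`-th tree into the star, sending the
root `r i` to the common amalgamated root. -/
def starJ {n : ℕ} {W : Fin n → Type} [∀ i, DecidableEq (W i)]
    (r : ∀ i, W i) (i : Fin n) :
    W i → Unit ⊕ (Σ i, {x : W i // x ≠ r i}) :=
  fun x => if h : x = r i then Sum.inl () else Sum.inr ⟨i, x, h⟩

/-- The star: the disjoint union of the multigraphs `t i` with all the roots `r i`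
identified to a single vertex. -/
def starGraph {n : ℕ} {W F : Fin n → Type} [∀ i, DecidableEq (W i)]
    (t : ∀ i, Multigraph (W i) (F i)) (r : ∀ i, W i) :
    Multigraph (Unit ⊕ (Σ i, {x : W i // x ≠ r i})) (Σ i, F i) :=
  ⟨fun e => ((t e.1).ends e.2).map (starJ r e.1)⟩

/-! ## Graphs of matrices -/

/-- The partition of `V` identifying the input `vin` with the output `vout` (and nothing
else). -/
def rootSetoid {V : Type} (vin vout : V) : Setoid V where
  r a b := a = b ∨ ((a = vin ∨ a = vout) ∧ (b = vin ∨ b = vout))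
  iseqv := by
    constructor
    · intro x; exact Or.inl rfl
    · rintro x y (rfl | ⟨hx, hy⟩)
      · exact Or.inl rfl
      · exact Or.inr ⟨hy, hx⟩
    · rintro x y z (rfl | ⟨hx, hy⟩) (rfl | ⟨hy', hz⟩)
      · exact Or.inl rfl
      · exact Or.inr ⟨hy', hz⟩
      · exact Or.inr ⟨hx, hy⟩
      · exact Or.inr ⟨hx, hz⟩

/-- The graph of matrices `Z_g(A₁, …, A_K)` associated to a bi-rooted multidigraph `g`
with input `vin`, output `vout` and edge ordering `o`. -/
noncomputable def graphOfMatrices {V E : Type} [Fintype V] [Fintype E] [DecidableEq V] {K N : ℕ}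
    (g : Multidigraph V E) (vin vout : V) (o : E ≃ Fin K)
    (A : Fin K → Matrix (Fin N) (Fin N) ℂ) : Matrix (Fin N) (Fin N) ℂ :=
  Matrix.of fun i j =>
    ∑ φ : V → Fin N,
      if φ vout = i ∧ φ vin = j then ∏ e : E, A (o e) (φ (g.tgt e)) (φ (g.src e)) else 0

/-! ## Set partitions as finite set systems -/

/-- `P` is a partition of the (finite) type `V`: its blocks are nonempty and every
element of `V` lies in exactly one block. -/
def IsPartitionOf (V : Type) [DecidableEq V] (P : Finset (Finset V)) : Prop :=
  (∀ B ∈ P, B.Nonempty) ∧ ∀ v : V, ∃! B, B ∈ P ∧ v ∈ B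

/-- The block of the partition `P` containing `v`. -/
def blockOf {V : Type} [DecidableEq V] (P : Finset (Finset V)) (hP : IsPartitionOf V P)
    (v : V) : {B : Finset V // B ∈ P} :=
  ⟨Finset.choose (fun B => v ∈ B) P (hP.2 v),
    Finset.choose_mem (fun B => v ∈ B) P (hP.2 v)⟩

/-! ### Auxiliary lemmas for statement 10 -/

namespace Multigraph

variable {V E : Type} {G : Multigraph V E}

theorem ReachAvoid.mono {F F' : Set E} (hF : F' ⊆ F) {u v : V}
    (h : G.ReachAvoid F u v) : G.ReachAvoid F' u v := by
  induction h with
  | refl => exact .refl _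
  | tail e he hvw _ ih => exact .tail e (fun hc => he (hF hc)) hvw ih

theorem ReachAvoid.trans {F : Set E} {u v w : V} (h : G.ReachAvoid F u v)
    (h2 : G.ReachAvoid F v w) : G.ReachAvoid F u w := by
  induction h2 with
  | refl => exact h
  | tail e he hvw _ ih => exact .tail e he hvw ih

theorem ReachAvoid.single {F : Set E} {e : E} (he : e ∉ F) {u v : V}
    (h : G.ends e = s(u, v)) : G.ReachAvoid F u v := .tail e he h (.refl u)

theorem ReachAvoid.symm {F : Set E} {u v : V} (h : G.ReachAvoid F u v) :
    G.ReachAvoid F v u := by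
  induction h with
  | refl => exact .refl _
  | tail e he hvw _ ih =>
      exact (ReachAvoid.single he (by rw [hvw, Sym2.eq_swap])).trans ih

namespace Walk

theorem verts_ne_nil : ∀ {u v : V} (p : G.Walk u v), p.verts ≠ []
  | _, _, .nil v => by simp [Walk.verts]
  | _, _, .cons e h p => by simp [Walk.verts]

theorem left_mem_verts : ∀ {u v : V} (p : G.Walk u v), u ∈ p.verts
  | _, _, .nil v => by simp [Walk.verts]
  | _, _, .cons e h p => by simp [Walk.verts]

theorem getLast_verts {u v : V} (p : G.Walk u v) :
    p.verts.getLast (verts_ne_nil p) = v := by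
  induction p with
  | nil w => rfl
  | cons e h p ih =>
      exact (List.getLast_cons (verts_ne_nil p)).trans ih

theorem mem_verts_of_ends {u v : V} (p : G.Walk u v) {f : E} {x y : V}
    (hf : f ∈ p.edges) (hxy : G.ends f = s(x, y)) : x ∈ p.verts ∧ y ∈ p.verts := by
  induction p with
  | nil w => simp [Walk.edges] at hf
  | cons e h p ih =>
      simp only [Walk.edges, List.mem_cons] at hf
      rcases hf with rfl | hf
      · rw [h, Sym2.eq_iff] at hxy
        rcases hxy with ⟨rfl, rfl⟩ | ⟨rfl, rfl⟩
        · exact ⟨by simp [Walk.verts], by simp [Walk.verts, left_mem_verts p]⟩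
        · exact ⟨by simp [Walk.verts, left_mem_verts p], by simp [Walk.verts]⟩
      · have := ih hf
        exact ⟨by simp [Walk.verts, this.1], by simp [Walk.verts, this.2]⟩

theorem IsPath.edges_nodup {u v : V} (p : G.Walk u v) (hp : p.IsPath) :
    p.edges.Nodup := by
  induction p with
  | nil w => simp [Walk.edges]
  | cons e h p ih =>
      have hp' : (_ :: p.verts).Nodup := hp
      rw [List.nodup_cons] at hp'
      rw [show (Walk.cons e h p).edges = e :: p.edges from rfl, List.nodup_cons]
      exact ⟨fun he => hp'.1 (mem_verts_of_ends p he h).1, ih hp'.2⟩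

theorem exists_suffix {u v x : V} (p : G.Walk u v) (hp : p.IsPath) (hx : x ∈ p.verts) :
    ∃ q : G.Walk x v, q.IsPath ∧ ∀ f ∈ q.edges, f ∈ p.edges := by
  induction p with
  | nil w =>
      simp only [Walk.verts, List.mem_singleton] at hx
      subst hx
      exact ⟨.nil _, by simp [Walk.IsPath, Walk.verts], by simp [Walk.edges]⟩
  | cons e h p ih =>
      simp only [Walk.verts, List.mem_cons] at hx
      have hp' : (_ :: p.verts).Nodup := hp
      rw [List.nodup_cons] at hp'
      rcases hx with rfl | hx
      · exact ⟨.cons e h p, hp, fun f hf => hf⟩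
      · obtain ⟨q, hq1, hq2⟩ := ih hp'.2 hx
        exact ⟨q, hq1, fun f hf => by
          simp only [Walk.edges, List.mem_cons]; exact Or.inr (hq2 f hf)⟩

theorem exists_path {u v : V} (p : G.Walk u v) :
    ∃ q : G.Walk u v, q.IsPath ∧ ∀ f ∈ q.edges, f ∈ p.edges := by
  induction p with
  | nil w => exact ⟨.nil w, by simp [Walk.IsPath, Walk.verts], by simp [Walk.edges]⟩
  | @cons a c w e h p ih =>
      obtain ⟨q, hq1, hq2⟩ := ih
      by_cases hu : a ∈ q.verts
      · obtain ⟨r, hr1, hr2⟩ := exists_suffix q hq1 hu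
        exact ⟨r, hr1, fun f hf => by
          simp only [Walk.edges, List.mem_cons]
          exact Or.inr (hq2 f (hr2 f hf))⟩
      · refine ⟨.cons e h q, ?_, ?_⟩
        · show (a :: q.verts).Nodup
          rw [List.nodup_cons]
          exact ⟨hu, hq1⟩
        · intro f hf
          simp only [Walk.edges, List.mem_cons] at hf ⊢
          rcases hf with rfl | hf
          · exact Or.inl rfl
          · exact Or.inr (hq2 f hf)

end Walk

theorem exists_walk_snoc {u v w : V} (p : G.Walk u v) (e : E)
    (he : G.ends e = s(v, w)) : ∃ q : G.Walk u w, ∀ f, f ∈ q.edges ↔ f = e ∨ f ∈ p.edges := by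
  induction p with
  | nil v => exact ⟨.cons e he (.nil w), by simp [Walk.edges]⟩
  | cons f hf p ih =>
      obtain ⟨q, hq⟩ := ih he
      refine ⟨.cons f hf q, fun g => ?_⟩
      simp only [Walk.edges, List.mem_cons, hq g]
      tauto

theorem ReachAvoid.exists_walk {F : Set E} {u v : V} (h : G.ReachAvoid F u v) :
    ∃ p : G.Walk u v, ∀ f ∈ p.edges, f ∉ F := by
  induction h with
  | refl => exact ⟨.nil _, by simp [Walk.edges]⟩
  | tail e he hvw _ ih =>
      obtain ⟨p, hp⟩ := ih
      obtain ⟨q, hq⟩ := exists_walk_snoc p e hvw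
      refine ⟨q, fun f hf => ?_⟩
      rcases (hq f).1 hf with rfl | hf'
      · exact he
      · exact hp f hf'

theorem exists_spanning [Fintype V] [Fintype E] [DecidableEq V] [DecidableEq E]
    [Nonempty V] (hG : G.Connected) :
    ∃ T : Finset E, T.card + 1 = Fintype.card V ∧ ∀ u v : V, G.ReachAvoid (↑T)ᶜ u v := by
  classical
  obtain ⟨v₀⟩ := (inferInstance : Nonempty V)
  have crossing : ∀ (R : Finset V) {a b : V}, G.ReachAvoid ∅ a b → a ∈ R → b ∉ R →
      ∃ (e : E) (x y : V), G.ends e = s(x, y) ∧ x ∈ R ∧ y ∉ R := by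
    intro R a b h
    induction h with
    | refl => intro ha hb; exact absurd ha hb
    | @tail v' w' e he hvw h ih =>
        intro ha hb
        by_cases hv : v' ∈ R
        · exact ⟨e, v', w', hvw, hv, hb⟩
        · exact ih ha hv
  have key : ∀ (k : ℕ) (R : Finset V) (T : Finset E), Fintype.card V - R.card = k →
      v₀ ∈ R → T.card + 1 = R.card →
      (∀ e ∈ T, ∀ x y : V, G.ends e = s(x, y) → x ∈ R ∧ y ∈ R) →
      (∀ u ∈ R, G.ReachAvoid (↑T)ᶜ v₀ u) →
      ∃ T' : Finset E, T'.card + 1 = Fintype.card V ∧ ∀ u : V, G.ReachAvoid (↑T')ᶜ v₀ u := by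
    intro k
    induction k using Nat.strong_induction_on with
    | _ k ih =>
      intro R T hk hv₀ hcard hends hreach
      by_cases hR : R = Finset.univ
      · subst hR
        refine ⟨T, by simpa [Finset.card_univ] using hcard, fun u => hreach u (by simp)⟩
      · obtain ⟨w, hw⟩ : ∃ w, w ∉ R := by
          by_contra hc
          push_neg at hc
          exact hR (Finset.eq_univ_iff_forall.2 hc)
        obtain ⟨e, x, y, hexy, hx, hy⟩ := crossing R (hG v₀ w) hv₀ hw
        have heT : e ∉ T := fun hc => hy (hends e hc x y hexy).2
        have hRcard : R.card < Fintype.card V := by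
          have := Finset.card_lt_card (Finset.ssubset_univ_iff.2 hR)
          simpa [Finset.card_univ] using this
        have hkpos : 0 < k := by omega
        refine ih (k - 1) (by omega) (insert y R) (insert e T) ?_
          (Finset.mem_insert_of_mem hv₀) ?_ ?_ ?_
        · rw [Finset.card_insert_of_notMem hy]
          omega
        · rw [Finset.card_insert_of_notMem hy, Finset.card_insert_of_notMem heT]
          omega
        · intro f hf a b hab
          rcases Finset.mem_insert.1 hf with rfl | hf
          · rw [hexy, Sym2.eq_iff] at hab
            rcases hab with ⟨rfl, rfl⟩ | ⟨rfl, rfl⟩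
            · exact ⟨Finset.mem_insert_of_mem hx, Finset.mem_insert_self _ _⟩
            · exact ⟨Finset.mem_insert_self _ _, Finset.mem_insert_of_mem hx⟩
          · have := hends f hf a b hab
            exact ⟨Finset.mem_insert_of_mem this.1, Finset.mem_insert_of_mem this.2⟩
        · intro u hu
          have hmono : (↑(insert e T) : Set E)ᶜ ⊆ (↑T : Set E)ᶜ := by
            intro f hf
            simp only [Set.mem_compl_iff, Finset.coe_insert, Set.mem_insert_iff,
              Finset.mem_coe] at hf ⊢
            tauto
          rcases Finset.mem_insert.1 hu with rfl | hu
          · refine ReachAvoid.tail e ?_ hexy ((hreach x hx).mono hmono)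
            simp
          · exact (hreach u hu).mono hmono
  obtain ⟨T, h1, h2⟩ := key (Fintype.card V - ({v₀} : Finset V).card) {v₀} ∅ rfl
    (by simp) (by simp) (by simp) (by
      intro u hu
      simp only [Finset.mem_singleton] at hu
      cases hu
      exact Multigraph.ReachAvoid.refl _)
  exact ⟨T, h1, fun u v => (h2 u).symm.trans (h2 v)⟩

/-- In a connected graph where every edge lies on a unique simple cycle,
`#E + 1 ≤ #V + #cycles`. -/
theorem cactus_count [Fintype V] [Fintype E] [DecidableEq V] [DecidableEq E]
    [Nonempty V] (hG : G.Connected)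
    (hu : ∀ e : E, ∃! S : Finset E, G.IsSimpleCycleOn S ∧ e ∈ S)
    (𝒞 : Finset (Finset E)) (h𝒞 : ∀ S, S ∈ 𝒞 ↔ G.IsSimpleCycleOn S) :
    Fintype.card E + 1 ≤ Fintype.card V + 𝒞.card := by
  classical
  obtain ⟨T, hTcard, hTreach⟩ := exists_spanning hG
  have fund : ∀ e ∉ T, ∃ S : Finset E, G.IsSimpleCycleOn S ∧ e ∈ S ∧ S ⊆ insert e T := by
    intro e he
    obtain ⟨a, b, hab⟩ : ∃ a b, G.ends e = s(a, b) := (G.ends e).ind (fun x y => ⟨x, y, rfl⟩)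
    obtain ⟨p, hp⟩ := (hTreach b a).exists_walk
    have hpT : ∀ f ∈ p.edges, f ∈ T := by
      intro f hf
      have := hp f hf
      simpa using this
    obtain ⟨q, hq1, hq2⟩ := Walk.exists_path p
    have hqT : ∀ f ∈ q.edges, f ∈ T := fun f hf => hpT f (hq2 f hf)
    have heq : e ∉ q.edges := fun hc => he (hqT e hc)
    refine ⟨(Walk.cons e hab q).edges.toFinset, ⟨a, Walk.cons e hab q, ?_, ?_, ?_, rfl⟩, ?_, ?_⟩
    · show e :: q.edges ≠ []
      simp
    · show (e :: q.edges).Nodup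
      rw [List.nodup_cons]
      exact ⟨heq, Walk.IsPath.edges_nodup q hq1⟩
    · show (a :: q.verts).dropLast.Nodup
      rw [List.dropLast_cons_of_ne_nil (Walk.verts_ne_nil q), List.nodup_cons]
      constructor
      · intro hmem
        have hlast : q.verts.getLast (Walk.verts_ne_nil q) = a := Walk.getLast_verts q
        have hsplit := List.dropLast_append_getLast (Walk.verts_ne_nil q)
        have hnd : q.verts.Nodup := hq1
        rw [← hsplit, List.nodup_append] at hnd
        exact hnd.2.2 a hmem _ (List.mem_singleton_self _) hlast.symm
      · exact List.Nodup.sublist (List.dropLast_sublist _) hq1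
    · show e ∈ (e :: q.edges).toFinset
      simp
    · intro f hf
      rw [show (Walk.cons e hab q).edges = e :: q.edges from rfl, List.mem_toFinset,
        List.mem_cons] at hf
      rcases hf with rfl | hf
      · exact Finset.mem_insert_self _ _
      · exact Finset.mem_insert_of_mem (hqT f hf)
  have choose_eq : ∀ (e : E) (S : Finset E), G.IsSimpleCycleOn S → e ∈ S →
      (hu e).choose = S := by
    intro e S hS heS
    exact ((hu e).choose_spec.2 S ⟨hS, heS⟩).symm
  have hinj : Set.InjOn (fun e => (hu e).choose) ↑(Tᶜ : Finset E) := by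
    intro e₁ h₁ e₂ h₂ heq
    simp only [Finset.coe_compl, Set.mem_compl_iff, Finset.mem_coe] at h₁ h₂
    obtain ⟨S₁, hS₁, he₁, hsub₁⟩ := fund e₁ h₁
    have hc₁ : (hu e₁).choose = S₁ := choose_eq e₁ S₁ hS₁ he₁
    have heq' : (hu e₁).choose = (hu e₂).choose := heq
    have he₂' : e₂ ∈ S₁ := by
      have : e₂ ∈ (hu e₂).choose := (hu e₂).choose_spec.1.2
      rwa [← heq', hc₁] at this
    rcases Finset.mem_insert.1 (hsub₁ he₂') with h | h
    · exact h.symm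
    · exact absurd h h₂
  have hmem : ∀ e ∈ (Tᶜ : Finset E), (hu e).choose ∈ 𝒞 := by
    intro e _
    exact (h𝒞 _).2 (hu e).choose_spec.1.1
  have hcard : (Tᶜ : Finset E).card ≤ 𝒞.card :=
    Finset.card_le_card_of_injOn _ hmem hinj
  have hcompl : T.card + (Tᶜ : Finset E).card = Fintype.card E := by
    rw [Finset.card_compl]
    have := Finset.card_le_univ T
    omega
  omega

end Multigraph

theorem List.getElem_idx_eq {α : Type} (l : List α) {i j : ℕ} (h : i = j) (hi : i < l.length) :
    l[i]'hi = l[j]'(h ▸ hi) := by subst h; rfl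

theorem List.exists_cyclic_transition {α : Type} (l : List α) (P : α → Prop)
    (hl : l ≠ []) (h₁ : ∃ x ∈ l, P x) (h₂ : ∃ x ∈ l, ¬ P x) :
    ∃ (i : ℕ) (hi : i < l.length), P (l[i]) ∧
      ¬ P (l[(i + 1) % l.length]'(Nat.mod_lt _ (List.length_pos_iff.2 hl))) := by
  by_contra hcon
  push_neg at hcon
  obtain ⟨x, hx, hPx⟩ := h₁
  obtain ⟨y, hy, hPy⟩ := h₂
  obtain ⟨i₁, hi₁, rfl⟩ := List.getElem_of_mem hx
  obtain ⟨i₂, hi₂, rfl⟩ := List.getElem_of_mem hy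
  have hlen : 0 < l.length := List.length_pos_iff.2 hl
  have step : ∀ d : ℕ, P (l[(i₁ + d) % l.length]'(Nat.mod_lt _ hlen)) := by
    intro d
    induction d with
    | zero =>
        rw [List.getElem_idx_eq l (by rw [Nat.add_zero, Nat.mod_eq_of_lt hi₁])]
        exact hPx
    | succ d ih =>
        have h3 := hcon ((i₁ + d) % l.length) (Nat.mod_lt _ hlen) ih
        rwa [List.getElem_idx_eq l
          (show ((i₁ + d) % l.length + 1) % l.length = (i₁ + (d + 1)) % l.length from by
            have := (Nat.ModEq.add_right 1 (Nat.mod_modEq (i₁ + d) l.length) :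
              ((i₁ + d) % l.length + 1) % l.length = ((i₁ + d) + 1) % l.length)
            rw [this, Nat.add_assoc])] at h3
  have hfin := step (l.length + i₂ - i₁)
  rw [List.getElem_idx_eq l
    (show (i₁ + (l.length + i₂ - i₁)) % l.length = i₂ from by
      rw [show i₁ + (l.length + i₂ - i₁) = i₂ + l.length by omega,
        Nat.add_mod_right, Nat.mod_eq_of_lt hi₂])] at hfin
  exact hPy hfin

namespace Multidigraph

variable {V E : Type} {D : Multidigraph V E}

namespace DiWalk

theorem length_verts : ∀ {u v : V} (p : D.DiWalk u v), p.verts.length = p.edges.length + 1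
  | _, _, .nil v => rfl
  | _, _, .cons e hs ht p => by
      show (_ :: p.verts).length = (_ :: p.edges).length + 1
      simp [length_verts p]

theorem verts_getElem_zero : ∀ {u v : V} (p : D.DiWalk u v)
    (h : 0 < p.verts.length), p.verts[0] = u
  | _, _, .nil v, _ => rfl
  | _, _, .cons e hs ht p, _ => rfl

theorem verts_getElem_last : ∀ {u v : V} (p : D.DiWalk u v)
    (h : p.edges.length < p.verts.length), p.verts[p.edges.length] = v
  | _, _, .nil v, _ => rfl
  | _, _, .cons e hs ht p, h => by
      have hlen : p.edges.length < p.verts.length := by rw [length_verts p]; omega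
      have ih := verts_getElem_last p hlen
      simpa [DiWalk.verts, DiWalk.edges, List.getElem_cons_succ] using ih

theorem src_getElem : ∀ {u v : V} (p : D.DiWalk u v) (i : ℕ) (hi : i < p.edges.length),
    D.src (p.edges[i]) = p.verts[i]'(by rw [length_verts]; omega)
  | _, _, .nil v, i, hi => by simp [DiWalk.edges] at hi
  | _, _, .cons e hs ht p, 0, hi => hs
  | _, _, .cons e hs ht p, i + 1, hi => by
      have hi' : i < p.edges.length := by
        simpa [DiWalk.edges] using hi
      have ih := src_getElem p i hi'
      simpa [DiWalk.verts, DiWalk.edges, List.getElem_cons_succ] using ih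

theorem tgt_getElem : ∀ {u v : V} (p : D.DiWalk u v) (i : ℕ) (hi : i < p.edges.length),
    D.tgt (p.edges[i]) = p.verts[i + 1]'(by rw [length_verts]; omega)
  | _, _, .cons e hs ht p, 0, hi => by
      have h0 : 0 < p.verts.length := by rw [length_verts p]; omega
      have hz := verts_getElem_zero p h0
      simpa [DiWalk.verts, DiWalk.edges, List.getElem_cons_succ, hz] using ht
  | _, _, .cons e hs ht p, i + 1, hi => by
      have hi' : i < p.edges.length := by
        simpa [DiWalk.edges] using hi
      have ih := tgt_getElem p i hi'
      simpa [DiWalk.verts, DiWalk.edges, List.getElem_cons_succ] using ih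
  | _, _, .nil v, i, hi => by simp [DiWalk.edges] at hi

/-- The underlying undirected walk of a directed walk. -/
def toWalk : ∀ {u v : V}, D.DiWalk u v → D.toMultigraph.Walk u v
  | _, _, .nil v => .nil v
  | _, _, .cons e hs ht p => .cons e (by rw [← hs, ← ht]; rfl) p.toWalk

theorem toWalk_edges : ∀ {u v : V} (p : D.DiWalk u v), p.toWalk.edges = p.edges
  | _, _, .nil v => rfl
  | _, _, .cons e hs ht p => by
      show e :: p.toWalk.edges = e :: p.edges
      rw [toWalk_edges p]

theorem toWalk_verts : ∀ {u v : V} (p : D.DiWalk u v), p.toWalk.verts = p.verts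
  | _, _, .nil v => rfl
  | _, _, .cons e hs ht p => by
      show _ :: p.toWalk.verts = _ :: p.verts
      rw [toWalk_verts p]

end DiWalk

section Cactus

variable [DecidableEq E]

/-- Total-function version of `List.next`. -/
noncomputable def nextIn (l : List E) (x : E) : E :=
  if hx : x ∈ l then List.next l x hx else x

/-- Total-function version of `List.prev`. -/
noncomputable def prevIn (l : List E) (x : E) : E :=
  if hx : x ∈ l then List.prev l x hx else x

theorem nextIn_mem {l : List E} {x : E} (hx : x ∈ l) : nextIn l x ∈ l := by
  rw [nextIn, dif_pos hx]
  exact List.next_mem l x hx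

theorem prevIn_nextIn {l : List E} (hnd : l.Nodup) {x : E} (hx : x ∈ l) :
    prevIn l (nextIn l x) = x := by
  rw [nextIn, dif_pos hx, prevIn, dif_pos (List.next_mem l x hx)]
  exact List.prev_next l hnd x hx

theorem nextIn_getElem {l : List E} (hnd : l.Nodup) {i : ℕ} (hi : i < l.length) :
    nextIn l (l[i]) = l[(i + 1) % l.length]'(Nat.mod_lt _ (by omega)) := by
  rw [nextIn, dif_pos (List.getElem_mem hi)]
  have := List.next_getElem l hnd i hi
  convert this using 2

open Classical in
/-- A chosen directed closed walk realizing a directed cycle. -/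
noncomputable def wkE (D : Multidigraph V E) [DecidableEq E] (S : Finset E) : List E :=
  if h : D.IsDiCycleOn S then h.choose_spec.choose.edges else []

theorem wkE_spec {S : Finset E} (h : D.IsDiCycleOn S) :
    D.wkE S ≠ [] ∧ (D.wkE S).Nodup ∧ (D.wkE S).toFinset = S ∧
      ∀ (i : ℕ) (hi : i < (D.wkE S).length),
        D.src ((D.wkE S)[(i + 1) % (D.wkE S).length]'(Nat.mod_lt _ (by omega))) =
          D.tgt ((D.wkE S)[i]) := by
  have hdef : D.wkE S = h.choose_spec.choose.edges := by
    simp only [wkE]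
    rw [dif_pos h]
  obtain ⟨hne, hnd, hdl, htf⟩ := h.choose_spec.choose_spec
  set p := h.choose_spec.choose with hp
  refine ⟨by rw [hdef]; exact hne, by rw [hdef]; exact hnd, by rw [hdef]; exact htf, ?_⟩
  simp only [hdef]
  intro i hi
  have hL : p.edges.length < p.verts.length := by rw [DiWalk.length_verts]; omega
  rw [DiWalk.tgt_getElem p i hi]
  by_cases hcase : i + 1 < p.edges.length
  · rw [List.getElem_idx_eq _ (Nat.mod_eq_of_lt hcase), DiWalk.src_getElem p (i + 1) hcase]
  · have hiL : i + 1 = p.edges.length := by omega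
    rw [List.getElem_idx_eq _ (show (i + 1) % p.edges.length = 0 from by
      rw [hiL, Nat.mod_self]), DiWalk.src_getElem p 0 (by omega),
      DiWalk.verts_getElem_zero p (by rw [DiWalk.length_verts]; omega)]
    rw [List.getElem_idx_eq _ (show i + 1 = p.edges.length from hiL),
      DiWalk.verts_getElem_last p hL]

variable {D : Multidigraph V E}

/-- The unique simple cycle through an edge of an oriented cactus. -/
noncomputable def cycOf (hc : D.IsOrientedCactus) (f : E) : Finset E :=
  (hc.1.2 f).choose

theorem cycOf_isCycle (hc : D.IsOrientedCactus) (f : E) :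
    D.toMultigraph.IsSimpleCycleOn (cycOf hc f) := (hc.1.2 f).choose_spec.1.1

theorem mem_cycOf (hc : D.IsOrientedCactus) (f : E) : f ∈ cycOf hc f :=
  (hc.1.2 f).choose_spec.1.2

theorem cycOf_eq (hc : D.IsOrientedCactus) {f : E} {S : Finset E}
    (hS : D.toMultigraph.IsSimpleCycleOn S) (hf : f ∈ S) : cycOf hc f = S :=
  ((hc.1.2 f).choose_spec.2 S ⟨hS, hf⟩).symm

theorem mem_wkE_cycOf (hc : D.IsOrientedCactus) (f : E) : f ∈ D.wkE (cycOf hc f) := by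
  have h := hc.2 _ (cycOf_isCycle hc f)
  rw [← List.mem_toFinset, (wkE_spec h).2.2.1]
  exact mem_cycOf hc f

/-- The successor of an edge in its unique directed cycle. -/
noncomputable def nxt (hc : D.IsOrientedCactus) (f : E) : E :=
  nextIn (D.wkE (cycOf hc f)) f

theorem nxt_mem_cycOf (hc : D.IsOrientedCactus) (f : E) : nxt hc f ∈ cycOf hc f := by
  have h := hc.2 _ (cycOf_isCycle hc f)
  rw [← (wkE_spec h).2.2.1, List.mem_toFinset]
  exact nextIn_mem (mem_wkE_cycOf hc f)

theorem src_nxt (hc : D.IsOrientedCactus) (f : E) : D.src (nxt hc f) = D.tgt f := by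
  have h := hc.2 _ (cycOf_isCycle hc f)
  obtain ⟨hne, hnd, htf, hcyc⟩ := wkE_spec h
  have hmem := mem_wkE_cycOf hc f
  show D.src (nextIn (D.wkE (cycOf hc f)) f) = D.tgt f
  clear htf hne h
  have key : ∀ l : List E, l.Nodup → (∀ (i : ℕ) (hi : i < l.length),
      D.src (l[(i + 1) % l.length]'(Nat.mod_lt _ (by omega))) = D.tgt (l[i])) → f ∈ l →
      D.src (nextIn l f) = D.tgt f := by
    intro l hnd hcyc hmem
    obtain ⟨i, hi, hfi⟩ := List.mem_iff_getElem.1 hmem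
    rw [← hfi, nextIn_getElem hnd hi]
    exact hcyc i hi
  exact key _ hnd hcyc hmem

theorem nxt_injective (hc : D.IsOrientedCactus) : Function.Injective (nxt hc) := by
  intro f g hfg
  have hmem : nxt hc f ∈ cycOf hc f := nxt_mem_cycOf hc f
  have hmem' : nxt hc f ∈ cycOf hc g := hfg ▸ nxt_mem_cycOf hc g
  have hSS : cycOf hc g = cycOf hc f :=
    (cycOf_eq hc (cycOf_isCycle hc g) hmem').symm.trans
      (cycOf_eq hc (cycOf_isCycle hc f) hmem)
  set l := D.wkE (cycOf hc f) with hl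
  have h := hc.2 _ (cycOf_isCycle hc f)
  obtain ⟨hne, hnd, htf, hcyc⟩ := wkE_spec h
  have hf : f ∈ l := mem_wkE_cycOf hc f
  have hg : g ∈ l := by rw [hl, ← hSS]; exact mem_wkE_cycOf hc g
  have e2 : nxt hc g = nextIn l g := by rw [nxt, hl, hSS]
  have h1 : prevIn l (nextIn l f) = f := prevIn_nextIn hnd hf
  have h2 : prevIn l (nextIn l g) = g := prevIn_nextIn hnd hg
  have e1 : nxt hc f = nextIn l f := rfl
  rw [← e1] at h1
  rw [← e2] at h2
  rw [hfg] at h1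
  exact h1.symm.trans h2

theorem exists_nxt_transition (hc : D.IsOrientedCactus) {S : Finset E}
    (hS : D.toMultigraph.IsSimpleCycleOn S) (P : E → Prop)
    (h₁ : ∃ x ∈ S, P x) (h₂ : ∃ x ∈ S, ¬ P x) :
    ∃ f ∈ S, P f ∧ ¬ P (nxt hc f) := by
  have h := hc.2 _ hS
  obtain ⟨hne, hnd, htf, hcyc⟩ := wkE_spec h
  have hmem : ∀ x, x ∈ D.wkE S ↔ x ∈ S := by
    intro x
    rw [← List.mem_toFinset, htf]
  obtain ⟨x, hx, hPx⟩ := h₁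
  obtain ⟨y, hy, hPy⟩ := h₂
  obtain ⟨i, hi, hPi, hPn⟩ := List.exists_cyclic_transition (D.wkE S) P hne
    ⟨x, (hmem x).2 hx, hPx⟩ ⟨y, (hmem y).2 hy, hPy⟩
  set l := D.wkE S with hl
  refine ⟨l[i], (hmem _).1 (List.getElem_mem hi), hPi, ?_⟩
  have hceq : cycOf hc (l[i]) = S := cycOf_eq hc hS ((hmem _).1 (List.getElem_mem hi))
  have : nxt hc (l[i]) = l[(i + 1) % l.length]'(Nat.mod_lt _ (by omega)) := by
    rw [nxt, hceq, ← hl]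
    exact nextIn_getElem hnd hi
  rw [this]
  exact hPn

end Cactus

end Multidigraph

/-- Let `t, t'` be finite directed trees with roots `ρ, ρ'` of degree
one, each with at least two vertices, in which no vertex has indegree and outdegree both
equal to one, and let `T` be the multidigraph obtained by identifying `ρ` with `ρ'`.
If `π` is a solid partition of the vertices of `T` whose quotient `T^π` is an oriented
cactus, then `π` induces a pair partition of the two vertex sets: every vertex of `t`
lies in the same block as exactly one vertex of `t'` and vice versa (with `ρ ↔ ρ'`). -/
theorem stmt_10 {V E V' E' : Type} [Fintype V] [Fintype V'] [Fintype E] [Fintype E']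
    [DecidableEq V] [DecidableEq V'] [DecidableEq E] [DecidableEq E']
    (t : Multidigraph V E) (t' : Multidigraph V' E') (ρ : V) (ρ' : V')
    (ht : t.toMultigraph.IsTree) (ht' : t'.toMultigraph.IsTree)
    (hV : 1 < Fintype.card V) (hV' : 1 < Fintype.card V')
    (hρ : t.toMultigraph.degree ρ = 1) (hρ' : t'.toMultigraph.degree ρ' = 1)
    (hdeg : ∀ v : V, ¬ (t.indeg v = 1 ∧ t.outdeg v = 1))
    (hdeg' : ∀ v' : V', ¬ (t'.indeg v' = 1 ∧ t'.outdeg v' = 1))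
    (σ : Setoid (V ⊕ {x : V' // x ≠ ρ'}))
    (hsolid₁ : ∀ a b : V, σ.r (Sum.inl a) (Sum.inl b) → a = b)
    (hsolid₂ : ∀ a b : V', σ.r (wedgeJ ρ ρ' a) (wedgeJ ρ ρ' b) → a = b)
    (hcactus : ((t.wedge t' ρ ρ').quot σ).IsOrientedCactus) :
    (∀ v : V, ∃! v' : V', σ.r (Sum.inl v) (wedgeJ ρ ρ' v')) ∧
    (∀ v' : V', ∃! v : V, σ.r (Sum.inl v) (wedgeJ ρ ρ' v')) := by
  classical
  -- Basic abbreviations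
  set D := (t.wedge t' ρ ρ').quot σ with hD
  have hconn : D.toMultigraph.Connected := hcactus.1.1
  have huniq := hcactus.1.2
  -- quotient facts
  have hqex : ∀ x y : V ⊕ {x : V' // x ≠ ρ'},
      Quotient.mk σ x = Quotient.mk σ y → σ.r x y := fun x y h => Quotient.exact h
  have hqmk : ∀ x y : V ⊕ {x : V' // x ≠ ρ'},
      σ.r x y → Quotient.mk σ x = Quotient.mk σ y := fun x y h => Quotient.sound h
  have hwJ : wedgeJ ρ ρ' ρ' = Sum.inl ρ := dif_pos rfl
  -- paired predicates
  set Pa : V → Prop := fun v => ∃ v', σ.r (Sum.inl v) (wedgeJ ρ ρ' v') with hPa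
  set Pa' : V' → Prop := fun v' => ∃ v, σ.r (Sum.inl v) (wedgeJ ρ ρ' v') with hPa'
  -- source and target computations in the quotient
  have hsrcL : ∀ e : E, D.src (Sum.inl e) = Quotient.mk σ (Sum.inl (t.src e)) := fun _ => rfl
  have htgtL : ∀ e : E, D.tgt (Sum.inl e) = Quotient.mk σ (Sum.inl (t.tgt e)) := fun _ => rfl
  have hsrcR : ∀ e : E', D.src (Sum.inr e) = Quotient.mk σ (wedgeJ ρ ρ' (t'.src e)) :=
    fun _ => rfl
  have htgtR : ∀ e : E', D.tgt (Sum.inr e) = Quotient.mk σ (wedgeJ ρ ρ' (t'.tgt e)) :=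
    fun _ => rfl
  -- lifting monochromatic walks
  have lift_left : ∀ (a b : Quotient σ) (p : D.DiWalk a b),
      (∀ f ∈ p.edges, f.isLeft) → ∀ va : V, a = Quotient.mk σ (Sum.inl va) →
      ∃ vb : V, b = Quotient.mk σ (Sum.inl vb) ∧ ∃ q : t.DiWalk va vb,
        p.edges = q.edges.map Sum.inl ∧
        p.verts = q.verts.map (fun x => Quotient.mk σ (Sum.inl x)) := by
    intro a b p
    induction p with
    | nil w =>
        intro _ va ha
        exact ⟨va, ha, .nil va, by simp [Multidigraph.DiWalk.edges],
          by simp [Multidigraph.DiWalk.verts, ha]⟩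
    | cons f hs htg p ih =>
        intro hall va ha
        have hfl : f.isLeft := hall f (by simp [Multidigraph.DiWalk.edges])
        cases f with
        | inr e' => simp at hfl
        | inl e =>
            have hsv : t.src e = va := by
              refine hsolid₁ _ _ (hqex _ _ ?_)
              rw [← hsrcL e, hs, ha]
            obtain ⟨vb, hb, q', hq'e, hq'v⟩ := ih
              (fun g hg => hall g (by simp [Multidigraph.DiWalk.edges, hg]))
              (t.tgt e) (by rw [← htg, htgtL])
            refine ⟨vb, hb, .cons e hsv rfl q', ?_, ?_⟩
            · simp [Multidigraph.DiWalk.edges, hq'e]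
            · simp [Multidigraph.DiWalk.verts, hq'v, ha]
  have lift_right : ∀ (a b : Quotient σ) (p : D.DiWalk a b),
      (∀ f ∈ p.edges, f.isRight) → ∀ va : V', a = Quotient.mk σ (wedgeJ ρ ρ' va) →
      ∃ vb : V', b = Quotient.mk σ (wedgeJ ρ ρ' vb) ∧ ∃ q : t'.DiWalk va vb,
        p.edges = q.edges.map Sum.inr ∧
        p.verts = q.verts.map (fun x => Quotient.mk σ (wedgeJ ρ ρ' x)) := by
    intro a b p
    induction p with
    | nil w =>
        intro _ va ha
        exact ⟨va, ha, .nil va, by simp [Multidigraph.DiWalk.edges],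
          by simp [Multidigraph.DiWalk.verts, ha]⟩
    | cons f hs htg p ih =>
        intro hall va ha
        have hfl : f.isRight := hall f (by simp [Multidigraph.DiWalk.edges])
        cases f with
        | inl e => simp at hfl
        | inr e =>
            have hsv : t'.src e = va := by
              refine hsolid₂ _ _ (hqex _ _ ?_)
              rw [← hsrcR e, hs, ha]
            obtain ⟨vb, hb, q', hq'e, hq'v⟩ := ih
              (fun g hg => hall g (by simp [Multidigraph.DiWalk.edges, hg]))
              (t'.tgt e) (by rw [← htg, htgtR])
            refine ⟨vb, hb, .cons e hsv rfl q', ?_, ?_⟩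
            · simp [Multidigraph.DiWalk.edges, hq'e]
            · simp [Multidigraph.DiWalk.verts, hq'v, ha]
  -- every simple cycle of the quotient uses edges of both trees
  have hboth : ∀ S : Finset (E ⊕ E'), D.toMultigraph.IsSimpleCycleOn S →
      (∃ x ∈ S, x.isLeft) ∧ (∃ x ∈ S, x.isRight) := by
    intro S hS
    obtain ⟨w, p, hne, hnd, hdl, htf⟩ := hcactus.2 S hS
    constructor
    · by_contra hno
      push_neg at hno
      have hallR : ∀ f ∈ p.edges, f.isRight := by
        intro f hf
        have hfS : f ∈ S := by rw [← htf]; exact List.mem_toFinset.2 hf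
        have := hno f hfS
        cases f with
        | inl e => simp at this
        | inr e => simp
      cases p with
      | nil => simp [Multidigraph.DiWalk.edges] at hne
      | cons f hs htg p₁ =>
          have hfr : f.isRight := hallR f (by simp [Multidigraph.DiWalk.edges])
          cases f with
          | inl e => simp at hfr
          | inr e =>
              obtain ⟨vb, hb, q, hqe, hqv⟩ := lift_right _ _ (.cons (Sum.inr e) hs htg p₁)
                hallR (t'.src e) (by rw [← hs, hsrcR])
              have hvv : t'.src e = vb := by
                refine hsolid₂ _ _ (hqex _ _ ?_)
                rw [← hb, ← hsrcR, hs]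
              obtain rfl := hvv
              refine ht'.2 q.edges.toFinset ⟨_, q.toWalk, ?_, ?_, ?_, ?_⟩
              · rw [Multidigraph.DiWalk.toWalk_edges]
                intro hq
                rw [hqe, hq] at hne
                simp at hne
              · rw [Multidigraph.DiWalk.toWalk_edges]
                rw [hqe] at hnd
                exact hnd.of_map _
              · rw [Multidigraph.DiWalk.toWalk_verts]
                rw [hqv, ← List.map_dropLast] at hdl
                exact hdl.of_map _
              · rw [Multidigraph.DiWalk.toWalk_edges]
    · by_contra hno
      push_neg at hno
      have hallL : ∀ f ∈ p.edges, f.isLeft := by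
        intro f hf
        have hfS : f ∈ S := by rw [← htf]; exact List.mem_toFinset.2 hf
        have := hno f hfS
        cases f with
        | inl e => simp
        | inr e => simp at this
      cases p with
      | nil => simp [Multidigraph.DiWalk.edges] at hne
      | cons f hs htg p₁ =>
          have hfl : f.isLeft := hallL f (by simp [Multidigraph.DiWalk.edges])
          cases f with
          | inr e => simp at hfl
          | inl e =>
              obtain ⟨vb, hb, q, hqe, hqv⟩ := lift_left _ _ (.cons (Sum.inl e) hs htg p₁)
                hallL (t.src e) (by rw [← hs, hsrcL])
              have hvv : t.src e = vb := by
                refine hsolid₁ _ _ (hqex _ _ ?_)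
                rw [← hb, ← hsrcL, hs]
              obtain rfl := hvv
              refine ht.2 q.edges.toFinset ⟨_, q.toWalk, ?_, ?_, ?_, ?_⟩
              · rw [Multidigraph.DiWalk.toWalk_edges]
                intro hq
                rw [hqe, hq] at hne
                simp at hne
              · rw [Multidigraph.DiWalk.toWalk_edges]
                rw [hqe] at hnd
                exact hnd.of_map _
              · rw [Multidigraph.DiWalk.toWalk_verts]
                rw [hqv, ← List.map_dropLast] at hdl
                exact hdl.of_map _
              · rw [Multidigraph.DiWalk.toWalk_edges]
  -- successor machinery
  set nx : (E ⊕ E') → (E ⊕ E') := Multidigraph.nxt hcactus with hnx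
  have hnx_src : ∀ f, D.src (nx f) = D.tgt f := Multidigraph.src_nxt hcactus
  have hnx_inj : Function.Injective nx := Multidigraph.nxt_injective hcactus
  have hnx_bij : Function.Bijective nx := (Finite.injective_iff_bijective).1 hnx_inj
  -- existence of an edge at each vertex of the trees
  have edge_at : ∀ u : V, ∃ e : E, t.src e = u ∨ t.tgt e = u := by
    intro u
    obtain ⟨u₂, hu₂⟩ := Fintype.exists_ne_of_one_lt_card hV u
    have hreach := ht.1 u u₂
    have claim : ∀ w : V, t.toMultigraph.ReachAvoid ∅ u w →
        u = w ∨ ∃ e : E, t.src e = u ∨ t.tgt e = u := by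
      intro w h
      induction h with
      | refl => exact Or.inl rfl
      | @tail x y e he hvw h ih =>
          rcases ih with rfl | hex
          · right
            have : s(t.src e, t.tgt e) = s(u, y) := hvw
            rw [Sym2.eq_iff] at this
            rcases this with ⟨h1, _⟩ | ⟨_, h2⟩
            · exact ⟨e, Or.inl h1⟩
            · exact ⟨e, Or.inr h2⟩
          · exact Or.inr hex
    rcases claim u₂ hreach with rfl | hex
    · exact absurd rfl hu₂
    · exact hex
  have edge_at' : ∀ u : V', ∃ e : E', t'.src e = u ∨ t'.tgt e = u := by
    intro u
    obtain ⟨u₂, hu₂⟩ := Fintype.exists_ne_of_one_lt_card hV' u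
    have hreach := ht'.1 u u₂
    have claim : ∀ w : V', t'.toMultigraph.ReachAvoid ∅ u w →
        u = w ∨ ∃ e : E', t'.src e = u ∨ t'.tgt e = u := by
      intro w h
      induction h with
      | refl => exact Or.inl rfl
      | @tail x y e he hvw h ih =>
          rcases ih with rfl | hex
          · right
            have : s(t'.src e, t'.tgt e) = s(u, y) := hvw
            rw [Sym2.eq_iff] at this
            rcases this with ⟨h1, _⟩ | ⟨_, h2⟩
            · exact ⟨e, Or.inl h1⟩
            · exact ⟨e, Or.inr h2⟩
          · exact Or.inr hex
    rcases claim u₂ hreach with rfl | hex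
    · exact absurd rfl hu₂
    · exact hex
  -- successor behaviour at unpaired vertices (left side)
  have himp : ∀ u : V, ¬ Pa u → ∀ e : E, t.tgt e = u →
      ∃ e₂ : E, nx (Sum.inl e) = Sum.inl e₂ ∧ t.src e₂ = u := by
    intro u hu e he
    have hst := hnx_src (Sum.inl e)
    cases hne : nx (Sum.inl e) with
    | inl e₂ =>
        refine ⟨e₂, rfl, ?_⟩
        rw [hne, hsrcL, htgtL, he] at hst
        exact hsolid₁ _ _ (hqex _ _ hst)
    | inr e₂' =>
        exfalso
        rw [hne, hsrcR, htgtL, he] at hst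
        exact hu ⟨t'.src e₂', (hqex _ _ hst.symm)⟩
  have hprev : ∀ u : V, ¬ Pa u → ∀ e₂ : E, t.src e₂ = u →
      ∃ e : E, nx (Sum.inl e) = Sum.inl e₂ ∧ t.tgt e = u := by
    intro u hu e₂ he₂
    obtain ⟨w, hw⟩ := hnx_bij.2 (Sum.inl e₂)
    have hst := hnx_src w
    rw [hw, hsrcL, he₂] at hst
    cases w with
    | inl e =>
        rw [htgtL] at hst
        exact ⟨e, hw, hsolid₁ _ _ (hqex _ _ hst.symm)⟩
    | inr e' =>
        exfalso
        rw [htgtR] at hst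
        exact hu ⟨t'.tgt e', hqex _ _ hst⟩
  -- successor behaviour at unpaired vertices (right side)
  have himp' : ∀ u : V', ¬ Pa' u → ∀ e : E', t'.tgt e = u →
      ∃ e₂ : E', nx (Sum.inr e) = Sum.inr e₂ ∧ t'.src e₂ = u := by
    intro u hu e he
    have hst := hnx_src (Sum.inr e)
    cases hne : nx (Sum.inr e) with
    | inr e₂ =>
        refine ⟨e₂, rfl, ?_⟩
        rw [hne, hsrcR, htgtR, he] at hst
        exact hsolid₂ _ _ (hqex _ _ hst)
    | inl e₂ =>
        exfalso
        rw [hne, hsrcL, htgtR, he] at hst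
        exact hu ⟨t.src e₂, hqex _ _ hst⟩
  have hprev' : ∀ u : V', ¬ Pa' u → ∀ e₂ : E', t'.src e₂ = u →
      ∃ e : E', nx (Sum.inr e) = Sum.inr e₂ ∧ t'.tgt e = u := by
    intro u hu e₂ he₂
    obtain ⟨w, hw⟩ := hnx_bij.2 (Sum.inr e₂)
    have hst := hnx_src w
    rw [hw, hsrcR, he₂] at hst
    cases w with
    | inr e =>
        rw [htgtR] at hst
        exact ⟨e, hw, hsolid₂ _ _ (hqex _ _ hst.symm)⟩
    | inl e =>
        exfalso
        rw [htgtL] at hst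
        exact hu ⟨t.tgt e, hqex _ _ hst.symm⟩
  -- spanning-tree edge bounds
  haveI hVne : Nonempty V := Fintype.card_pos_iff.mp (by omega)
  haveI hV'ne : Nonempty V' := Fintype.card_pos_iff.mp (by omega)
  have hE1 : Fintype.card V ≤ Fintype.card E + 1 := by
    obtain ⟨T, hT, _⟩ := Multigraph.exists_spanning (G := t.toMultigraph) ht.1
    have := Finset.card_le_univ T
    omega
  have hE1' : Fintype.card V' ≤ Fintype.card E' + 1 := by
    obtain ⟨T, hT, _⟩ := Multigraph.exists_spanning (G := t'.toMultigraph) ht'.1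
    have := Finset.card_le_univ T
    omega
  haveI hEne : Nonempty E := Fintype.card_pos_iff.mp (by omega)
  haveI hE'ne : Nonempty E' := Fintype.card_pos_iff.mp (by omega)
  haveI hEEne : Nonempty (E ⊕ E') := ⟨Sum.inl (Classical.arbitrary E)⟩
  -- degree balance at unpaired vertices
  have hbalance : ∀ u : V, ¬ Pa u → t.indeg u = t.outdeg u := by
    intro u hu
    rw [Multidigraph.indeg, Multidigraph.outdeg]
    apply le_antisymm
    · refine Finset.card_le_card_of_injOn
        (fun e => (nx (Sum.inl e)).elim id (fun _ => e)) ?_ ?_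
      · intro e hee
        simp only [Finset.mem_coe, Finset.mem_filter, Finset.mem_univ, true_and] at hee ⊢
        obtain ⟨e₂, h1, h2⟩ := himp u hu e hee
        rw [h1]
        exact h2
      · intro e₁ h₁ e₂ h₂ heq
        simp only [Finset.coe_filter, Set.mem_setOf_eq, Finset.mem_univ, true_and] at h₁ h₂
        obtain ⟨a, ha1, _⟩ := himp u hu e₁ h₁
        obtain ⟨b, hb1, _⟩ := himp u hu e₂ h₂
        have heq' : (nx (Sum.inl e₁)).elim id (fun _ => e₁) =
            (nx (Sum.inl e₂)).elim id (fun _ => e₂) := heq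
        rw [ha1, hb1] at heq'
        have hab : a = b := heq'
        have : nx (Sum.inl e₁) = nx (Sum.inl e₂) := by rw [ha1, hb1, hab]
        exact Sum.inl_injective (hnx_inj this)
    · refine Finset.card_le_card_of_injOn
        (fun e => ((Function.invFun nx) (Sum.inl e)).elim id (fun _ => e)) ?_ ?_
      · intro e hee
        simp only [Finset.mem_coe, Finset.mem_filter, Finset.mem_univ, true_and] at hee ⊢
        obtain ⟨e₂, h1, h2⟩ := hprev u hu e hee
        have hiv : Function.invFun nx (Sum.inl e) = Sum.inl e₂ := by
          rw [← h1, Function.leftInverse_invFun hnx_inj]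
        rw [hiv]
        exact h2
      · intro e₁ h₁ e₂ h₂ heq
        simp only [Finset.coe_filter, Set.mem_setOf_eq, Finset.mem_univ, true_and] at h₁ h₂
        obtain ⟨a, ha1, _⟩ := hprev u hu e₁ h₁
        obtain ⟨b, hb1, _⟩ := hprev u hu e₂ h₂
        have hiva : Function.invFun nx (Sum.inl e₁) = Sum.inl a := by
          rw [← ha1, Function.leftInverse_invFun hnx_inj]
        have hivb : Function.invFun nx (Sum.inl e₂) = Sum.inl b := by
          rw [← hb1, Function.leftInverse_invFun hnx_inj]
        have heq' : ((Function.invFun nx) (Sum.inl e₁)).elim id (fun _ => e₁) =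
            ((Function.invFun nx) (Sum.inl e₂)).elim id (fun _ => e₂) := heq
        rw [hiva, hivb] at heq'
        have hab : a = b := heq'
        rw [hab] at ha1
        rw [ha1] at hb1
        exact Sum.inl_injective hb1
  have hbalance' : ∀ u : V', ¬ Pa' u → t'.indeg u = t'.outdeg u := by
    intro u hu
    rw [Multidigraph.indeg, Multidigraph.outdeg]
    apply le_antisymm
    · refine Finset.card_le_card_of_injOn
        (fun e => (nx (Sum.inr e)).elim (fun _ => e) id) ?_ ?_
      · intro e hee
        simp only [Finset.mem_coe, Finset.mem_filter, Finset.mem_univ, true_and] at hee ⊢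
        obtain ⟨e₂, h1, h2⟩ := himp' u hu e hee
        rw [h1]
        exact h2
      · intro e₁ h₁ e₂ h₂ heq
        simp only [Finset.coe_filter, Set.mem_setOf_eq, Finset.mem_univ, true_and] at h₁ h₂
        obtain ⟨a, ha1, _⟩ := himp' u hu e₁ h₁
        obtain ⟨b, hb1, _⟩ := himp' u hu e₂ h₂
        have heq' : (nx (Sum.inr e₁)).elim (fun _ => e₁) id =
            (nx (Sum.inr e₂)).elim (fun _ => e₂) id := heq
        rw [ha1, hb1] at heq'
        have hab : a = b := heq'
        have : nx (Sum.inr e₁) = nx (Sum.inr e₂) := by rw [ha1, hb1, hab]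
        exact Sum.inr_injective (hnx_inj this)
    · refine Finset.card_le_card_of_injOn
        (fun e => ((Function.invFun nx) (Sum.inr e)).elim (fun _ => e) id) ?_ ?_
      · intro e hee
        simp only [Finset.mem_coe, Finset.mem_filter, Finset.mem_univ, true_and] at hee ⊢
        obtain ⟨e₂, h1, h2⟩ := hprev' u hu e hee
        have hiv : Function.invFun nx (Sum.inr e) = Sum.inr e₂ := by
          rw [← h1, Function.leftInverse_invFun hnx_inj]
        rw [hiv]
        exact h2
      · intro e₁ h₁ e₂ h₂ heq
        simp only [Finset.coe_filter, Set.mem_setOf_eq, Finset.mem_univ, true_and] at h₁ h₂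
        obtain ⟨a, ha1, _⟩ := hprev' u hu e₁ h₁
        obtain ⟨b, hb1, _⟩ := hprev' u hu e₂ h₂
        have hiva : Function.invFun nx (Sum.inr e₁) = Sum.inr a := by
          rw [← ha1, Function.leftInverse_invFun hnx_inj]
        have hivb : Function.invFun nx (Sum.inr e₂) = Sum.inr b := by
          rw [← hb1, Function.leftInverse_invFun hnx_inj]
        have heq' : ((Function.invFun nx) (Sum.inr e₁)).elim (fun _ => e₁) id =
            ((Function.invFun nx) (Sum.inr e₂)).elim (fun _ => e₂) id := heq
        rw [hiva, hivb] at heq'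
        have hab : a = b := heq'
        rw [hab] at ha1
        rw [ha1] at hb1
        exact Sum.inr_injective hb1
  have hdeg2 : ∀ u : V, ¬ Pa u → 2 ≤ t.indeg u := by
    intro u hu
    have hb := hbalance u hu
    have h1 : 1 ≤ t.indeg u := by
      obtain ⟨e, he | he⟩ := edge_at u
      · have : 0 < t.outdeg u :=
          Finset.card_pos.2 ⟨e, by simp [Multidigraph.outdeg, he]⟩
        omega
      · have : 0 < t.indeg u :=
          Finset.card_pos.2 ⟨e, by simp [Multidigraph.indeg, he]⟩
        omega
    have hne1 : t.indeg u ≠ 1 := fun h1' => hdeg u ⟨h1', by rw [← hb]; exact h1'⟩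
    omega
  have hdeg2' : ∀ u : V', ¬ Pa' u → 2 ≤ t'.indeg u := by
    intro u hu
    have hb := hbalance' u hu
    have h1 : 1 ≤ t'.indeg u := by
      obtain ⟨e, he | he⟩ := edge_at' u
      · have : 0 < t'.outdeg u :=
          Finset.card_pos.2 ⟨e, by simp [Multidigraph.outdeg, he]⟩
        omega
      · have : 0 < t'.indeg u :=
          Finset.card_pos.2 ⟨e, by simp [Multidigraph.indeg, he]⟩
        omega
    have hne1 : t'.indeg u ≠ 1 := fun h1' => hdeg' u ⟨h1', by rw [← hb]; exact h1'⟩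
    omega
  -- the counting sets
  set U : Finset V := Finset.univ.filter (fun v => ¬ Pa v) with hUdef
  set U' : Finset V' := Finset.univ.filter (fun v' => ¬ Pa' v') with hU'def
  set CY : Finset (Finset (E ⊕ E')) :=
    Finset.univ.filter (fun S => D.toMultigraph.IsSimpleCycleOn S) with hCYdef
  set A : Finset E := Finset.univ.filter (fun e => ¬ Pa (t.tgt e)) with hAdef
  set X : Finset E := Finset.univ.filter (fun e => (nx (Sum.inl e)).isLeft) with hXdef
  set Y : Finset E := Finset.univ.filter (fun e => (nx (Sum.inl e)).isRight) with hYdef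
  set A' : Finset E' := Finset.univ.filter (fun e => ¬ Pa' (t'.tgt e)) with hA'def
  set X' : Finset E' := Finset.univ.filter (fun e => (nx (Sum.inr e)).isRight) with hX'def
  set Y' : Finset E' := Finset.univ.filter (fun e => (nx (Sum.inr e)).isLeft) with hY'def
  -- 2|U| ≤ |A|
  have hcardA : 2 * U.card ≤ A.card := by
    have hbi : A = U.biUnion (fun u => Finset.univ.filter (fun e => t.tgt e = u)) := by
      ext e
      simp only [hAdef, hUdef, Finset.mem_filter, Finset.mem_univ, true_and,
        Finset.mem_biUnion]
      constructor
      · intro h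
        exact ⟨t.tgt e, h, rfl⟩
      · rintro ⟨u, hu, rfl⟩
        exact hu
    have hdisj : ∀ u₁ ∈ U, ∀ u₂ ∈ U, u₁ ≠ u₂ →
        Disjoint (Finset.univ.filter (fun e => t.tgt e = u₁))
          (Finset.univ.filter (fun e => t.tgt e = u₂)) := by
      intro u₁ _ u₂ _ hne
      rw [Finset.disjoint_left]
      intro e he1 he2
      simp only [Finset.mem_filter, Finset.mem_univ, true_and] at he1 he2
      exact hne (he1 ▸ he2 ▸ rfl)
    have hsum : ∀ u ∈ U, 2 ≤ (Finset.univ.filter (fun e => t.tgt e = u)).card := by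
      intro u hu
      have : ¬ Pa u := by
        rw [hUdef] at hu
        exact (Finset.mem_filter.1 hu).2
      exact hdeg2 u this
    calc 2 * U.card = ∑ _u ∈ U, 2 := by
          rw [Finset.sum_const, smul_eq_mul]
          ring
      _ ≤ ∑ u ∈ U, (Finset.univ.filter (fun e => t.tgt e = u)).card :=
          Finset.sum_le_sum hsum
      _ = A.card := by rw [hbi, Finset.card_biUnion hdisj]
  have hcardA' : 2 * U'.card ≤ A'.card := by
    have hbi : A' = U'.biUnion (fun u => Finset.univ.filter (fun e => t'.tgt e = u)) := by
      ext e
      simp only [hA'def, hU'def, Finset.mem_filter, Finset.mem_univ, true_and,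
        Finset.mem_biUnion]
      constructor
      · intro h
        exact ⟨t'.tgt e, h, rfl⟩
      · rintro ⟨u, hu, rfl⟩
        exact hu
    have hdisj : ∀ u₁ ∈ U', ∀ u₂ ∈ U', u₁ ≠ u₂ →
        Disjoint (Finset.univ.filter (fun e => t'.tgt e = u₁))
          (Finset.univ.filter (fun e => t'.tgt e = u₂)) := by
      intro u₁ _ u₂ _ hne
      rw [Finset.disjoint_left]
      intro e he1 he2
      simp only [Finset.mem_filter, Finset.mem_univ, true_and] at he1 he2
      exact hne (he1 ▸ he2 ▸ rfl)
    have hsum : ∀ u ∈ U', 2 ≤ (Finset.univ.filter (fun e => t'.tgt e = u)).card := by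
      intro u hu
      have : ¬ Pa' u := by
        rw [hU'def] at hu
        exact (Finset.mem_filter.1 hu).2
      exact hdeg2' u this
    calc 2 * U'.card = ∑ _u ∈ U', 2 := by
          rw [Finset.sum_const, smul_eq_mul]
          ring
      _ ≤ ∑ u ∈ U', (Finset.univ.filter (fun e => t'.tgt e = u)).card :=
          Finset.sum_le_sum hsum
      _ = A'.card := by rw [hbi, Finset.card_biUnion hdisj]
  -- A ⊆ X
  have hAX : A ⊆ X := by
    intro e he
    rw [hAdef, Finset.mem_filter] at he
    obtain ⟨e₂, h1, _⟩ := himp (t.tgt e) he.2 e rfl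
    rw [hXdef, Finset.mem_filter]
    refine ⟨Finset.mem_univ _, ?_⟩
    rw [h1]
    rfl
  have hAX' : A' ⊆ X' := by
    intro e he
    rw [hA'def, Finset.mem_filter] at he
    obtain ⟨e₂, h1, _⟩ := himp' (t'.tgt e) he.2 e rfl
    rw [hX'def, Finset.mem_filter]
    refine ⟨Finset.mem_univ _, ?_⟩
    rw [h1]
    rfl
  -- |X| + |Y| = |E|
  have hXY : X.card + Y.card = Fintype.card E := by
    have hYeq : Y = Finset.univ.filter (fun e => ¬ (nx (Sum.inl e)).isLeft) := by
      ext e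
      simp only [hYdef, Finset.mem_filter, Finset.mem_univ, true_and]
      cases h : nx (Sum.inl e) <;> simp
    rw [hXdef, hYeq, Finset.card_filter_add_card_filter_not, Finset.card_univ]
  have hXY' : X'.card + Y'.card = Fintype.card E' := by
    have hYeq : Y' = Finset.univ.filter (fun e => ¬ (nx (Sum.inr e)).isRight) := by
      ext e
      simp only [hY'def, Finset.mem_filter, Finset.mem_univ, true_and]
      cases h : nx (Sum.inr e) <;> simp
    rw [hX'def, hYeq, Finset.card_filter_add_card_filter_not, Finset.card_univ]
  -- |CY| ≤ |Y| and |CY| ≤ |Y'|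
  have hexY : ∀ S ∈ CY, ∃ e : E, Sum.inl e ∈ S ∧ (nx (Sum.inl e)).isRight := by
    intro S hS
    have hS' : D.toMultigraph.IsSimpleCycleOn S := by
      rw [hCYdef, Finset.mem_filter] at hS
      exact hS.2
    obtain ⟨h1, h2⟩ := hboth S hS'
    have h2' : ∃ x ∈ S, ¬ Sum.isLeft x := by
      obtain ⟨x, hx, hxr⟩ := h2
      exact ⟨x, hx, Sum.not_isLeft.mpr hxr⟩
    obtain ⟨f, hf, hfl, hfn⟩ :=
      Multidigraph.exists_nxt_transition hcactus hS' (fun x => x.isLeft = true) h1 h2'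
    rw [← hnx] at hfn
    cases f with
    | inr e => simp at hfl
    | inl e =>
        exact ⟨e, hf, Sum.not_isLeft.mp hfn⟩
  have hexY' : ∀ S ∈ CY, ∃ e : E', Sum.inr e ∈ S ∧ (nx (Sum.inr e)).isLeft := by
    intro S hS
    have hS' : D.toMultigraph.IsSimpleCycleOn S := by
      rw [hCYdef, Finset.mem_filter] at hS
      exact hS.2
    obtain ⟨h1, h2⟩ := hboth S hS'
    have h2' : ∃ x ∈ S, ¬ Sum.isRight x := by
      obtain ⟨x, hx, hxr⟩ := h1
      exact ⟨x, hx, Sum.not_isRight.mpr hxr⟩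
    obtain ⟨f, hf, hfl, hfn⟩ :=
      Multidigraph.exists_nxt_transition hcactus hS' (fun x => x.isRight = true) h2 h2'
    rw [← hnx] at hfn
    cases f with
    | inl e => simp at hfl
    | inr e =>
        exact ⟨e, hf, Sum.not_isRight.mp hfn⟩
  have hCYY : CY.card ≤ Y.card := by
    set F : Finset (E ⊕ E') → E := fun S =>
      if h : ∃ e : E, Sum.inl e ∈ S ∧ (nx (Sum.inl e)).isRight then h.choose
      else Classical.arbitrary E with hF
    refine Finset.card_le_card_of_injOn F ?_ ?_
    · intro S hS
      have hex := hexY S hS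
      rw [Finset.mem_coe, hYdef, Finset.mem_filter]
      refine ⟨Finset.mem_univ _, ?_⟩
      rw [hF]
      simp only [dif_pos hex]
      exact hex.choose_spec.2
    · intro S₁ hS₁ S₂ hS₂ heq
      simp only [Finset.mem_coe] at hS₁ hS₂
      have hex₁ := hexY S₁ hS₁
      have hex₂ := hexY S₂ hS₂
      have hF₁ : F S₁ = hex₁.choose := by rw [hF]; simp only [dif_pos hex₁]
      have hF₂ : F S₂ = hex₂.choose := by rw [hF]; simp only [dif_pos hex₂]
      have hm₁ : Sum.inl (F S₁) ∈ S₁ := by rw [hF₁]; exact hex₁.choose_spec.1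
      have hm₂ : Sum.inl (F S₂) ∈ S₂ := by rw [hF₂]; exact hex₂.choose_spec.1
      rw [heq] at hm₁
      have hc₁ : D.toMultigraph.IsSimpleCycleOn S₁ := by
        rw [hCYdef, Finset.mem_filter] at hS₁
        exact hS₁.2
      have hc₂ : D.toMultigraph.IsSimpleCycleOn S₂ := by
        rw [hCYdef, Finset.mem_filter] at hS₂
        exact hS₂.2
      exact (huniq (Sum.inl (F S₂))).unique ⟨hc₁, hm₁⟩ ⟨hc₂, hm₂⟩
  have hCYY' : CY.card ≤ Y'.card := by
    set F : Finset (E ⊕ E') → E' := fun S =>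
      if h : ∃ e : E', Sum.inr e ∈ S ∧ (nx (Sum.inr e)).isLeft then h.choose
      else Classical.arbitrary E' with hF
    refine Finset.card_le_card_of_injOn F ?_ ?_
    · intro S hS
      have hex := hexY' S hS
      rw [Finset.mem_coe, hY'def, Finset.mem_filter]
      refine ⟨Finset.mem_univ _, ?_⟩
      rw [hF]
      simp only [dif_pos hex]
      exact hex.choose_spec.2
    · intro S₁ hS₁ S₂ hS₂ heq
      simp only [Finset.mem_coe] at hS₁ hS₂
      have hex₁ := hexY' S₁ hS₁
      have hex₂ := hexY' S₂ hS₂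
      have hF₁ : F S₁ = hex₁.choose := by rw [hF]; simp only [dif_pos hex₁]
      have hF₂ : F S₂ = hex₂.choose := by rw [hF]; simp only [dif_pos hex₂]
      have hm₁ : Sum.inr (F S₁) ∈ S₁ := by rw [hF₁]; exact hex₁.choose_spec.1
      have hm₂ : Sum.inr (F S₂) ∈ S₂ := by rw [hF₂]; exact hex₂.choose_spec.1
      rw [heq] at hm₁
      have hc₁ : D.toMultigraph.IsSimpleCycleOn S₁ := by
        rw [hCYdef, Finset.mem_filter] at hS₁
        exact hS₁.2
      have hc₂ : D.toMultigraph.IsSimpleCycleOn S₂ := by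
        rw [hCYdef, Finset.mem_filter] at hS₂
        exact hS₂.2
      exact (huniq (Sum.inr (F S₂))).unique ⟨hc₁, hm₁⟩ ⟨hc₂, hm₂⟩
  -- global cycle count
  haveI : Nonempty (Quotient σ) := ⟨Quotient.mk σ (Sum.inl ρ)⟩
  have hcount := Multigraph.cactus_count (G := D.toMultigraph) hconn huniq CY
    (fun S => by rw [hCYdef]; simp)
  rw [Fintype.card_sum] at hcount
  -- cardinality of the quotient, two ways
  have hp1 : Fintype.card (Quotient σ) = Fintype.card V + U'.card := by
    have hdisj : Disjoint (Finset.univ.image (fun v : V => Quotient.mk σ (Sum.inl v)))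
        (U'.image (fun v' => Quotient.mk σ (wedgeJ ρ ρ' v'))) := by
      rw [Finset.disjoint_left]
      intro q hq1 hq2
      obtain ⟨v, _, rfl⟩ := Finset.mem_image.1 hq1
      obtain ⟨v', hv', heq⟩ := Finset.mem_image.1 hq2
      have hv'2 : ¬ Pa' v' := by
        rw [hU'def] at hv'
        exact (Finset.mem_filter.1 hv').2
      exact hv'2 ⟨v, hqex _ _ heq.symm⟩
    have hunion : (Finset.univ.image (fun v : V => Quotient.mk σ (Sum.inl v))) ∪
        (U'.image (fun v' => Quotient.mk σ (wedgeJ ρ ρ' v'))) = Finset.univ := by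
      rw [Finset.eq_univ_iff_forall]
      intro q
      obtain ⟨x, rfl⟩ := q.exists_rep
      rw [Finset.mem_union]
      cases x with
      | inl v => exact Or.inl (Finset.mem_image.2 ⟨v, Finset.mem_univ _, rfl⟩)
      | inr x' =>
          obtain ⟨v', hne'⟩ := x'
          have hwx : wedgeJ ρ ρ' v' = Sum.inr ⟨v', hne'⟩ := dif_neg hne'
          by_cases hp : Pa' v'
          · obtain ⟨v, hv⟩ := hp
            refine Or.inl (Finset.mem_image.2 ⟨v, Finset.mem_univ _, ?_⟩)
            rw [← hwx]
            exact hqmk _ _ hv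
          · refine Or.inr (Finset.mem_image.2 ⟨v', ?_, by rw [hwx]⟩)
            rw [hU'def, Finset.mem_filter]
            exact ⟨Finset.mem_univ _, hp⟩
    have hcard1 : (Finset.univ.image (fun v : V => Quotient.mk σ (Sum.inl v))).card =
        Fintype.card V := by
      rw [Finset.card_image_of_injective _ (fun v₁ v₂ h => hsolid₁ _ _ (hqex _ _ h)),
        Finset.card_univ]
    have hcard2 : (U'.image (fun v' => Quotient.mk σ (wedgeJ ρ ρ' v'))).card = U'.card :=
      Finset.card_image_of_injective _ (fun v₁ v₂ h => hsolid₂ _ _ (hqex _ _ h))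
    rw [← Finset.card_univ, ← hunion, Finset.card_union_of_disjoint hdisj, hcard1, hcard2]
  have hp2 : Fintype.card (Quotient σ) = Fintype.card V' + U.card := by
    have hdisj : Disjoint
        (Finset.univ.image (fun v' : V' => Quotient.mk σ (wedgeJ ρ ρ' v')))
        (U.image (fun v => Quotient.mk σ (Sum.inl v))) := by
      rw [Finset.disjoint_left]
      intro q hq1 hq2
      obtain ⟨v', _, rfl⟩ := Finset.mem_image.1 hq1
      obtain ⟨v, hv, heq⟩ := Finset.mem_image.1 hq2
      have hv2 : ¬ Pa v := by
        rw [hUdef] at hv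
        exact (Finset.mem_filter.1 hv).2
      exact hv2 ⟨v', hqex _ _ heq⟩
    have hunion : (Finset.univ.image (fun v' : V' => Quotient.mk σ (wedgeJ ρ ρ' v'))) ∪
        (U.image (fun v => Quotient.mk σ (Sum.inl v))) = Finset.univ := by
      rw [Finset.eq_univ_iff_forall]
      intro q
      obtain ⟨x, rfl⟩ := q.exists_rep
      rw [Finset.mem_union]
      cases x with
      | inl v =>
          by_cases hp : Pa v
          · obtain ⟨v', hv'⟩ := hp
            refine Or.inl (Finset.mem_image.2 ⟨v', Finset.mem_univ _, ?_⟩)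
            exact (hqmk _ _ hv').symm
          · refine Or.inr (Finset.mem_image.2 ⟨v, ?_, rfl⟩)
            rw [hUdef, Finset.mem_filter]
            exact ⟨Finset.mem_univ _, hp⟩
      | inr x' =>
          obtain ⟨v', hne'⟩ := x'
          have hwx : wedgeJ ρ ρ' v' = Sum.inr ⟨v', hne'⟩ := dif_neg hne'
          exact Or.inl (Finset.mem_image.2 ⟨v', Finset.mem_univ _, by rw [hwx]⟩)
    have hcard1 : (Finset.univ.image
        (fun v' : V' => Quotient.mk σ (wedgeJ ρ ρ' v'))).card = Fintype.card V' := by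
      rw [Finset.card_image_of_injective _ (fun v₁ v₂ h => hsolid₂ _ _ (hqex _ _ h)),
        Finset.card_univ]
    have hcard2 : (U.image (fun v => Quotient.mk σ (Sum.inl v))).card = U.card :=
      Finset.card_image_of_injective _ (fun v₁ v₂ h => hsolid₁ _ _ (hqex _ _ h))
    rw [← Finset.card_univ, ← hunion, Finset.card_union_of_disjoint hdisj, hcard1, hcard2]
  -- the final count
  have hXc : A.card ≤ X.card := Finset.card_le_card hAX
  have hXc' : A'.card ≤ X'.card := Finset.card_le_card hAX'
  have hU0 : U.card = 0 ∧ U'.card = 0 := by omega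
  -- conclusion
  have hUe : ∀ v : V, Pa v := by
    intro v
    by_contra h
    have hvU : v ∈ U := by
      rw [hUdef, Finset.mem_filter]
      exact ⟨Finset.mem_univ _, h⟩
    have := Finset.card_eq_zero.1 hU0.1
    rw [this] at hvU
    simp at hvU
  have hU'e : ∀ v' : V', Pa' v' := by
    intro v'
    by_contra h
    have hvU : v' ∈ U' := by
      rw [hU'def, Finset.mem_filter]
      exact ⟨Finset.mem_univ _, h⟩
    have := Finset.card_eq_zero.1 hU0.2
    rw [this] at hvU
    simp at hvU
  constructor
  · intro v
    obtain ⟨v', hv'⟩ := hUe v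
    exact ⟨v', hv', fun y hy => hsolid₂ y v' (σ.iseqv.trans (σ.iseqv.symm hy) hv')⟩
  · intro v'
    obtain ⟨v, hv⟩ := hU'e v'
    exact ⟨v, hv, fun y hy => hsolid₁ y v (σ.iseqv.trans hy (σ.iseqv.symm hv))⟩
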